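/- If u : H → ℝ is bounded and k-semi-concave, then for every 0 < t < k the function Ť_t u is (k - t)-semi-concave. -/

import Mathlib

open scoped RealInnerProductSpace

noncomputable def supConv {H : Type*} [NormedAddCommGroup H] [InnerProductSpace ℝ H]
    (t : ℝ) (u : H → ℝ) (x : H) : ℝ :=
  if t = 0 then u x else ⨆ y : H, (u y - ‖y - x‖ ^ 2 / t)

theorem supConv_semiconcave {H : Type*} [NormedAddCommGroup H] [InnerProductSpace ℝ H]
    (u : H → ℝ) (hu : ∃ C : ℝ, ∀ x, |u x| ≤ C) (k : ℝ)
    (hk : ConcaveOn ℝ Set.univ (fun x : H => u x - ‖x‖ ^ 2 / k))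
    (t : ℝ) (ht : 0 < t) (htk : t < k) :
    ConcaveOn ℝ Set.univ (fun x : H => supConv t u x - ‖x‖ ^ 2 / (k - t)) := by
  haveI : Nonempty H := ⟨0⟩
  obtain ⟨C, hC⟩ := hu
  have hk0 : (0:ℝ) < k := ht.trans htk
  have hkt : (0:ℝ) < k - t := by linarith
  have ht' : t ≠ 0 := ne_of_gt ht
  -- the sup-convolution with t ≠ 0 is the iSup
  have hsc : ∀ x : H, supConv t u x = ⨆ y : H, (u y - ‖y - x‖ ^ 2 / t) := by
    intro x; simp [supConv, ht']
  -- boundedness above of the family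
  have hbdd : ∀ x : H, BddAbove (Set.range fun y : H => u y - ‖y - x‖ ^ 2 / t) := by
    intro x
    refine ⟨C, ?_⟩
    rintro _ ⟨y, rfl⟩
    have h1 : 0 ≤ ‖y - x‖ ^ 2 / t := div_nonneg (by positivity) ht.le
    have := (abs_le.mp (hC y)).2
    linarith
  -- the coefficients
  set α : ℝ := Real.sqrt ((k - t) / (k * t)) with hαdef
  set β : ℝ := Real.sqrt (k / (t * (k - t))) with hβdef
  have hα0 : 0 ≤ α := Real.sqrt_nonneg _
  have hβ0 : 0 ≤ β := Real.sqrt_nonneg _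
  have hα2 : α ^ 2 = (k - t) / (k * t) := Real.sq_sqrt (by positivity)
  have hβ2 : β ^ 2 = k / (t * (k - t)) := Real.sq_sqrt (by positivity)
  have hαβ : α * β = 1 / t := by
    rw [hαdef, hβdef, ← Real.sqrt_mul (by positivity)]
    have : (k - t) / (k * t) * (k / (t * (k - t))) = (1/t)^2 := by
      field_simp
    rw [this, Real.sqrt_sq (by positivity)]
  -- key pointwise identity
  have key : ∀ x y : H, u y - ‖y - x‖ ^ 2 / t - ‖x‖ ^ 2 / (k - t)
      = (u y - ‖y‖ ^ 2 / k) - ‖α • y - β • x‖ ^ 2 := by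
    intro x y
    have e1 : ‖α • y - β • x‖ ^ 2
        = α ^ 2 * ‖y‖ ^ 2 - 2 * (α * β) * ⟪y, x⟫ + β ^ 2 * ‖x‖ ^ 2 := by
      rw [norm_sub_sq_real, real_inner_smul_left, real_inner_smul_right,
        norm_smul, norm_smul, Real.norm_eq_abs, Real.norm_eq_abs,
        abs_of_nonneg hα0, abs_of_nonneg hβ0]
      ring
    have e2 : ‖y - x‖ ^ 2 = ‖y‖ ^ 2 - 2 * ⟪y, x⟫ + ‖x‖ ^ 2 := norm_sub_sq_real y x
    rw [e1, e2, hα2, hβ2, hαβ]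
    field_simp
    ring
  -- norm-square convexity inequality
  have hnsq : ∀ (a b : ℝ) (z₁ z₂ : H), 0 ≤ a → 0 ≤ b → a + b = 1 →
      ‖a • z₁ + b • z₂‖ ^ 2 ≤ a * ‖z₁‖ ^ 2 + b * ‖z₂‖ ^ 2 := by
    intro a b z₁ z₂ ha hb hab
    have e : ‖a • z₁ + b • z₂‖ ^ 2
        = a ^ 2 * ‖z₁‖ ^ 2 + 2 * (a * b) * ⟪z₁, z₂⟫ + b ^ 2 * ‖z₂‖ ^ 2 := by
      rw [norm_add_sq_real, real_inner_smul_left, real_inner_smul_right,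
        norm_smul, norm_smul, Real.norm_eq_abs, Real.norm_eq_abs,
        abs_of_nonneg ha, abs_of_nonneg hb]
      ring
    have hip : ⟪z₁, z₂⟫ ≤ ‖z₁‖ * ‖z₂‖ := real_inner_le_norm z₁ z₂
    nlinarith [mul_nonneg ha hb, sq_nonneg (‖z₁‖ - ‖z₂‖), norm_nonneg z₁, norm_nonneg z₂]
  -- main concavity argument
  refine ⟨convex_univ, ?_⟩
  intro x₁ _ x₂ _ a b ha hb hab
  simp only [smul_eq_mul]
  set x₃ := a • x₁ + b • x₂ with hx₃
  -- the core step
  have step : ∀ y₁ y₂ : H,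
      a * (u y₁ - ‖y₁ - x₁‖ ^ 2 / t - ‖x₁‖ ^ 2 / (k - t))
      + b * (u y₂ - ‖y₂ - x₂‖ ^ 2 / t - ‖x₂‖ ^ 2 / (k - t))
      ≤ u (a • y₁ + b • y₂) - ‖(a • y₁ + b • y₂) - x₃‖ ^ 2 / t - ‖x₃‖ ^ 2 / (k - t) := by
    intro y₁ y₂
    set y₃ := a • y₁ + b • y₂ with hy₃
    rw [key x₁ y₁, key x₂ y₂, key x₃ y₃]
    have hz : α • y₃ - β • x₃ = a • (α • y₁ - β • x₁) + b • (α • y₂ - β • x₂) := by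
      rw [hy₃, hx₃]
      module
    have h1 := hk.2 (Set.mem_univ y₁) (Set.mem_univ y₂) ha hb hab
    simp only [smul_eq_mul] at h1
    have h2 := hnsq a b (α • y₁ - β • x₁) (α • y₂ - β • x₂) ha hb hab
    rw [← hz] at h2
    linarith
  -- bound each scaled iSup
  have goal2 : ∀ y₁ y₂ : H,
      a * (u y₁ - ‖y₁ - x₁‖ ^ 2 / t) + b * (u y₂ - ‖y₂ - x₂‖ ^ 2 / t)
      ≤ supConv t u x₃ + (a * (‖x₁‖ ^ 2 / (k - t)) + b * (‖x₂‖ ^ 2 / (k - t))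
          - ‖x₃‖ ^ 2 / (k - t)) := by
    intro y₁ y₂
    have h1 := step y₁ y₂
    have h2 : u (a • y₁ + b • y₂) - ‖(a • y₁ + b • y₂) - x₃‖ ^ 2 / t ≤ supConv t u x₃ := by
      rw [hsc]
      exact le_ciSup (hbdd x₃) (a • y₁ + b • y₂)
    nlinarith
  have hmain : a * supConv t u x₁ + b * supConv t u x₂
      ≤ supConv t u x₃ + (a * (‖x₁‖ ^ 2 / (k - t)) + b * (‖x₂‖ ^ 2 / (k - t))
          - ‖x₃‖ ^ 2 / (k - t)) := by
    rw [hsc x₁, hsc x₂, Real.mul_iSup_of_nonneg ha, Real.mul_iSup_of_nonneg hb]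
    rw [show (⨆ y : H, a * (u y - ‖y - x₁‖ ^ 2 / t)) + ⨆ y : H, b * (u y - ‖y - x₂‖ ^ 2 / t)
        = (⨆ y : H, a * (u y - ‖y - x₁‖ ^ 2 / t)) + ⨆ y : H, b * (u y - ‖y - x₂‖ ^ 2 / t) from rfl]
    have h1 : (⨆ y : H, a * (u y - ‖y - x₁‖ ^ 2 / t))
        ≤ (supConv t u x₃ + (a * (‖x₁‖ ^ 2 / (k - t)) + b * (‖x₂‖ ^ 2 / (k - t))
          - ‖x₃‖ ^ 2 / (k - t))) - ⨆ y : H, b * (u y - ‖y - x₂‖ ^ 2 / t) := by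
      refine ciSup_le fun y₁ => ?_
      rw [le_sub_iff_add_le, add_comm, ← le_sub_iff_add_le]
      refine ciSup_le fun y₂ => ?_
      have := goal2 y₁ y₂
      linarith
    linarith
  have := hmain
  linarith
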